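/- Let G be a group equipped with a left-invariant linear order < that is Archimedean. Then < is also right-invariant: for all f, g, h ∈ G, g < h implies gf < hf (so < is a bi-ordering). -/

import Mathlib

/-- An Archimedean left-invariant linear order on a group is also
right-invariant (hence a bi-ordering). -/
theorem archimedean_leftOrder_isBiOrder {G : Type*} [Group G] (r : G → G → Prop)
    (hord : IsStrictTotalOrder G r)
    (hleft : ∀ f g h : G, r g h → r (f * g) (f * h))
    (harch : ∀ g h : G, r 1 g → r 1 h → ∃ n : ℕ, r h (g ^ n)) :
    ∀ f g h : G, r g h → r (g * f) (h * f) := by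
  have htrans : ∀ {a b c : G}, r a b → r b c → r a c := fun hab hbc =>
    hord.trans _ _ _ hab hbc
  have hirr : ∀ a : G, ¬ r a a := fun a => hord.irrefl a
  have htri : ∀ a b : G, r a b ∨ a = b ∨ r b a := fun a b => by
    have := hord.trichotomous a b; tauto
  -- inverse flips sign
  have hinv : ∀ a : G, r 1 a → r a⁻¹ 1 := by
    intro a h
    have := hleft a⁻¹ 1 a h
    simpa using this
  have hinv' : ∀ a : G, r a 1 → r 1 a⁻¹ := by
    intro a h
    have := hleft a⁻¹ a 1 h
    simpa using this
  -- powers of positives are positive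
  have hpow : ∀ a : G, r 1 a → ∀ n : ℕ, 1 ≤ n → r 1 (a ^ n) := by
    intro a ha n hn
    induction n with
    | zero => omega
    | succ k ih =>
      rcases Nat.eq_zero_or_pos k with hz | hk
      · rw [hz]; simpa using ha
      · have h1 : r 1 (a ^ k) := ih hk
        have h2 : r a (a * a ^ k) := by simpa using hleft a 1 (a ^ k) h1
        have h3 : r 1 (a * a ^ k) := htrans ha h2
        rwa [← pow_succ'] at h3
  -- conjugation by a positive element preserves positivity
  have lemma1 : ∀ a b : G, r 1 a → r 1 b → r 1 (b * a * b⁻¹) := by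
    intro a b ha hb
    rcases htri 1 (b * a * b⁻¹) with h | h | h
    · exact h
    · have : a = 1 := by
        have := h.symm
        group at this
        -- b * a * b⁻¹ = 1 → a = 1
        exact by
          have h2 : b * a * b⁻¹ = 1 := h.symm
          have : a = b⁻¹ * 1 * b := by
            rw [← h2]; group
          simpa using this
      exact absurd ha (by rw [this]; exact hirr 1)
    · -- b * a * b⁻¹ < 1, derive contradiction
      have hneg : r 1 (b * a⁻¹ * b⁻¹) := by
        have := hinv' _ h
        simpa [mul_assoc] using this
      obtain ⟨n, hn⟩ := harch (b * a⁻¹ * b⁻¹) b hneg hb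
      have hconj : (b * a⁻¹ * b⁻¹) ^ n = b * (a ^ n)⁻¹ * b⁻¹ := by
        rw [conj_pow, inv_pow]
      rw [hconj] at hn
      -- cancel b on the left: 1 < (a^n)⁻¹ * b⁻¹
      have h1 : r 1 ((a ^ n)⁻¹ * b⁻¹) := by
        have := hleft b⁻¹ b (b * (a ^ n)⁻¹ * b⁻¹) hn
        simpa [mul_assoc] using this
      -- left multiply by a^n : a^n < b⁻¹
      have h2 : r (a ^ n) b⁻¹ := by
        have := hleft (a ^ n) 1 ((a ^ n)⁻¹ * b⁻¹) h1
        simpa [mul_assoc] using this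
      have h3 : r (a ^ n) 1 := htrans h2 (hinv b hb)
      exfalso
      rcases Nat.eq_zero_or_pos n with hz | hpos
      · rw [hz] at h3; simp at h3; exact hirr 1 h3
      · exact hirr 1 (htrans (hpow a ha n hpos) h3)
  -- conjugation by any element preserves positivity
  have lemma2 : ∀ a b : G, r 1 a → r 1 (b * a * b⁻¹) := by
    intro a b ha
    rcases htri 1 b with hb | hb | hb
    · exact lemma1 a b ha hb
    · rw [← hb]; simpa using ha
    · rcases htri 1 (b * a * b⁻¹) with h | h | h
      · exact h
      · exfalso
        have h2 : b * a * b⁻¹ = 1 := h.symm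
        have : a = 1 := by
          have : a = b⁻¹ * 1 * b := by rw [← h2]; group
          simpa using this
        rw [this] at ha; exact hirr 1 ha
      · exfalso
        have hneg : r 1 (b * a⁻¹ * b⁻¹) := by
          have := hinv' _ h
          simpa [mul_assoc] using this
        have hbinv : r 1 b⁻¹ := hinv' b hb
        have := lemma1 (b * a⁻¹ * b⁻¹) b⁻¹ hneg hbinv
        have hainv : r 1 a⁻¹ := by
          have h5 : b⁻¹ * (b * a⁻¹ * b⁻¹) * b⁻¹⁻¹ = a⁻¹ := by group
          rwa [h5] at this
        exact hirr 1 (htrans hainv (hinv a ha))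
  -- conclude right invariance
  intro f g h hgh
  have h1 : r 1 (g⁻¹ * h) := by
    have := hleft g⁻¹ g h hgh
    simpa using this
  have h2 : r 1 (f⁻¹ * (g⁻¹ * h) * f⁻¹⁻¹) := lemma2 (g⁻¹ * h) f⁻¹ h1
  have h3 := hleft (g * f) 1 (f⁻¹ * (g⁻¹ * h) * f⁻¹⁻¹) h2
  have heq : g * f * (f⁻¹ * (g⁻¹ * h) * f⁻¹⁻¹) = h * f := by group
  rw [mul_one, heq] at h3
  exact h3
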